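/- Let H be a complex Hilbert space and L a bounded isometry on H (‖Lx‖ = ‖x‖ for all x) which is pure, i.e., ⋂_{n≥0} range(Lⁿ) = {0}. Let W = (range L)ᗮ be the associated wandering subspace. If (g_i)_{i∈I} is a family of vectors of W with A‖f‖² ≤ ∑_{i∈I} |⟨f, g_i⟩|² ≤ B‖f‖² for all f ∈ W (for constants A, B > 0), then {Lⁿ g_i : i ∈ I, n ≥ 0} is a frame of H with the same bounds A, B. -/

import Mathlib

open scoped ComplexInnerProductSpace
open Filter

/-- Let `L` be a pure isometry on `H` and `W = (range L)ᗮ` its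
wandering subspace. Any frame `(gᵢ)` of `W` with bounds `A, B` gives rise to a frame
`{Lⁿ gᵢ}` of `H` with the same bounds. -/
theorem frame_of_iterations_pure_isometry
    (H : Type*) [NormedAddCommGroup H] [InnerProductSpace ℂ H] [CompleteSpace H]
    (L : H →L[ℂ] H) (hiso : ∀ x : H, ‖L x‖ = ‖x‖)
    (hpure : (⋂ n : ℕ, Set.range (L ^ n)) = ({0} : Set H))
    {ι : Type*} (g : ι → H)
    (hg : ∀ i, g i ∈ (LinearMap.range (L : H →ₗ[ℂ] H))ᗮ)
    (A B : ℝ) (hA : 0 < A) (hB : 0 < B)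
    (hframe : ∀ f ∈ (LinearMap.range (L : H →ₗ[ℂ] H))ᗮ,
      A * ‖f‖ ^ 2 ≤ ∑' i : ι, ‖⟪f, g i⟫‖ ^ 2 ∧
      ∑' i : ι, ‖⟪f, g i⟫‖ ^ 2 ≤ B * ‖f‖ ^ 2) :
    ∀ f : H,
      A * ‖f‖ ^ 2 ≤ ∑' p : ι × ℕ, ‖⟪f, (L ^ p.2) (g p.1)⟫‖ ^ 2 ∧
      ∑' p : ι × ℕ, ‖⟪f, (L ^ p.2) (g p.1)⟫‖ ^ 2 ≤ B * ‖f‖ ^ 2 := by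
  intro f
  set T := ContinuousLinearMap.adjoint L with hT
  have hinner : ∀ x y : H, ⟪L x, L y⟫ = ⟪x, y⟫ := fun x y =>
    LinearIsometry.inner_map_map (⟨(L : H →ₗ[ℂ] H), hiso⟩ : H →ₗᵢ[ℂ] H) x y
  have hadj_pow : ∀ n : ℕ, ContinuousLinearMap.adjoint (L ^ n) = T ^ n := by
    intro n
    rw [← ContinuousLinearMap.star_eq_adjoint, star_pow, ContinuousLinearMap.star_eq_adjoint]
  have hLpow_inner : ∀ (n : ℕ) (u v : H), ⟪(L ^ n) u, v⟫ = ⟪u, (T ^ n) v⟫ := by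
    intro n u v
    rw [← hadj_pow n, ContinuousLinearMap.adjoint_inner_right]
  have hL_inner_T : ∀ u v : H, ⟪L u, v⟫ = ⟪u, T v⟫ := fun u v =>
    (ContinuousLinearMap.adjoint_inner_right L u v).symm
  have hLpow_norm : ∀ (n : ℕ) (x : H), ‖(L ^ n) x‖ = ‖x‖ := by
    intro n
    induction n with
    | zero => intro x; simp
    | succ n ih =>
      intro x
      rw [pow_succ, ContinuousLinearMap.mul_apply, ih, hiso]
  have hinner_pow : ∀ (n : ℕ) (u v : H), ⟪(L ^ n) u, (L ^ n) v⟫ = ⟪u, v⟫ := by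
    intro n
    induction n with
    | zero => intro u v; simp
    | succ n ih =>
      intro u v
      rw [pow_succ, ContinuousLinearMap.mul_apply, ContinuousLinearMap.mul_apply, ih, hinner]
  -- the wandering components
  set w : ℕ → H := fun n => (T ^ n) f - L ((T ^ (n + 1)) f) with hw
  set a : ℕ → ℝ := fun n => ‖(T ^ n) f‖ ^ 2 with ha
  have hTsucc : ∀ n : ℕ, (T ^ (n + 1)) f = T ((T ^ n) f) := by
    intro n; rw [pow_succ', ContinuousLinearMap.mul_apply]
  have h_w_orth : ∀ (n : ℕ) (u : H), ⟪L u, w n⟫ = 0 := by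
    intro n u
    have : ⟪L u, (T ^ n) f - L ((T ^ (n + 1)) f)⟫ = 0 := by
      rw [inner_sub_right, hinner, hL_inner_T u ((T ^ n) f), ← hTsucc, sub_self]
    simpa [hw] using this
  have hw_mem : ∀ n, w n ∈ (LinearMap.range (L : H →ₗ[ℂ] H))ᗮ := by
    intro n
    rw [Submodule.mem_orthogonal]
    rintro u ⟨z, rfl⟩
    exact h_w_orth n z
  have hdecomp : ∀ n, (T ^ n) f = w n + L ((T ^ (n + 1)) f) := by
    intro n; simp [hw]
  have hnorm_split : ∀ n, a n = ‖w n‖ ^ 2 + a (n + 1) := by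
    intro n
    have h0 : ⟪w n, L ((T ^ (n + 1)) f)⟫ = 0 := by
      rw [← inner_conj_symm, h_w_orth n]
      simp
    have hre : RCLike.re ⟪w n, L ((T ^ (n + 1)) f)⟫ = 0 := by rw [h0]; simp
    calc a n = ‖w n + L ((T ^ (n + 1)) f)‖ ^ 2 := by rw [ha, ← hdecomp]
      _ = ‖w n‖ ^ 2 + 2 * RCLike.re ⟪w n, L ((T ^ (n + 1)) f)⟫ + ‖L ((T ^ (n + 1)) f)‖ ^ 2 :=
          norm_add_sq (𝕜 := ℂ) _ _
      _ = ‖w n‖ ^ 2 + a (n + 1) := by rw [hre, hiso]; simp [ha]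
  have key : ∀ (n : ℕ) (i : ι), ⟪f, (L ^ n) (g i)⟫ = ⟪w n, g i⟫ := by
    intro n i
    have h1 : ⟪f, (L ^ n) (g i)⟫ = ⟪(T ^ n) f, g i⟫ := by
      rw [← ContinuousLinearMap.adjoint_inner_left, hadj_pow]
    have h2 : ⟪L ((T ^ (n + 1)) f), g i⟫ = 0 :=
      (Submodule.mem_orthogonal _ _).mp (hg i) _ ⟨(T ^ (n + 1)) f, rfl⟩
    rw [h1, hdecomp n, inner_add_left, h2, add_zero]
  -- the sequence xₙ = Lⁿ Tⁿ f
  set x : ℕ → H := fun n => (L ^ n) ((T ^ n) f) with hx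
  have hxnorm : ∀ n, ‖x n‖ ^ 2 = a n := by intro n; rw [hx, hLpow_norm]
  have hx_split : ∀ k n : ℕ, k ≤ n → x n = (L ^ k) ((L ^ (n - k)) ((T ^ n) f)) := by
    intro k n hkn
    have h : L ^ n = (L ^ k) * (L ^ (n - k)) := by rw [← pow_add, Nat.add_sub_cancel' hkn]
    simp only [hx]
    rw [h, ContinuousLinearMap.mul_apply]
  have hTT : ∀ m n : ℕ, n ≤ m → (T ^ (m - n)) ((T ^ n) f) = (T ^ m) f := by
    intro m n hnm
    rw [← ContinuousLinearMap.mul_apply, ← pow_add, Nat.sub_add_cancel hnm]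
  have hinner_xx : ∀ m n : ℕ, n ≤ m → ⟪x m, x n⟫ = ((a m : ℝ) : ℂ) := by
    intro m n hnm
    rw [hx_split n m hnm]
    simp only [hx]
    rw [hinner_pow, hLpow_inner, hTT m n hnm, inner_self_eq_norm_sq_to_K]
    norm_cast
  have hdist : ∀ m n : ℕ, n ≤ m → ‖x n - x m‖ ^ 2 = a n - a m := by
    intro m n hnm
    have h1 : ⟪x n, x m⟫ = ((a m : ℝ) : ℂ) := by
      rw [← inner_conj_symm, hinner_xx m n hnm]
      simp
    have h2 : RCLike.re ⟪x n, x m⟫ = a m := by rw [h1]; simp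
    rw [norm_sub_sq (𝕜 := ℂ), h2, hxnorm, hxnorm]
    ring
  have hanti : ∀ n, a (n + 1) ≤ a n := by
    intro n
    rw [hnorm_split n]
    nlinarith [sq_nonneg ‖w n‖]
  have hbdd : ∀ n, 0 ≤ a n := fun n => sq_nonneg _
  -- a converges (antitone, bounded below), hence is Cauchy
  have hanti' : Antitone a := antitone_nat_of_succ_le hanti
  have ha_conv : ∃ c, Tendsto a atTop (nhds c) :=
    ⟨_, tendsto_atTop_ciInf hanti' ⟨0, fun y ⟨n, hn⟩ => hn ▸ hbdd n⟩⟩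
  obtain ⟨c, hc⟩ := ha_conv
  have ha_cauchy : CauchySeq a := hc.cauchySeq
  have hx_cauchy : CauchySeq x := by
    rw [Metric.cauchySeq_iff']
    intro ε hε
    obtain ⟨N, hN⟩ := Metric.cauchySeq_iff'.mp ha_cauchy (ε ^ 2) (by positivity)
    refine ⟨N, fun n hn => ?_⟩
    have h1 : ‖x N - x n‖ ^ 2 = a N - a n := hdist n N hn
    have h2 : dist (a n) (a N) < ε ^ 2 := hN n hn
    have h3 : a N - a n < ε ^ 2 := by
      rw [Real.dist_eq, abs_of_nonpos (by linarith [hanti' hn]), neg_sub] at h2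
      exact h2
    have h4 : ‖x n - x N‖ ^ 2 < ε ^ 2 := by rw [norm_sub_rev]; linarith
    rw [dist_eq_norm]
    exact lt_of_pow_lt_pow_left₀ 2 hε.le h4
  obtain ⟨y, hy⟩ := cauchySeq_tendsto_of_complete hx_cauchy
  have hy_mem : ∀ k : ℕ, y ∈ Set.range ⇑(L ^ k) := by
    intro k
    have hisom : Isometry ⇑(L ^ k) :=
      AddMonoidHomClass.isometry_of_norm _ (hLpow_norm k)
    have hclosed : IsClosed (Set.range ⇑(L ^ k)) := hisom.isClosedEmbedding.isClosed_range
    refine hclosed.mem_of_tendsto hy ?_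
    filter_upwards [eventually_ge_atTop k] with n hn
    exact ⟨(L ^ (n - k)) ((T ^ n) f), (hx_split k n hn).symm⟩
  have hy0 : y = 0 := by
    have : y ∈ (⋂ n : ℕ, Set.range ⇑(L ^ n)) := Set.mem_iInter.mpr hy_mem
    rw [hpure] at this
    exact this
  have ha0 : Tendsto a atTop (nhds 0) := by
    have h0 : Tendsto x atTop (nhds 0) := hy0 ▸ hy
    have h1 : Tendsto (fun n => ‖x n‖ ^ 2) atTop (nhds (‖(0 : H)‖ ^ 2)) := h0.norm.pow 2
    simp only [norm_zero, zero_pow, OfNat.ofNat_ne_zero, ne_eq, not_false_iff] at h1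
    exact Filter.Tendsto.congr (fun n => hxnorm n) h1
  -- the norms of w sum to ‖f‖²
  have hsum_w : HasSum (fun n => ‖w n‖ ^ 2) (‖f‖ ^ 2) := by
    rw [hasSum_iff_tendsto_nat_of_nonneg (fun n => sq_nonneg _)]
    have hps : ∀ n : ℕ, ∑ i ∈ Finset.range n, ‖w i‖ ^ 2 = a 0 - a n := by
      intro n
      have : ∀ i, ‖w i‖ ^ 2 = a i - a (i + 1) := by
        intro i; have := hnorm_split i; linarith
      rw [Finset.sum_congr rfl fun i _ => this i, Finset.sum_range_sub' a n]
    have ha00 : a 0 = ‖f‖ ^ 2 := by simp [ha]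
    have := (tendsto_const_nhds (x := a 0) (f := atTop)).sub ha0
    rw [sub_zero, ha00] at this
    exact this.congr fun n => (hps n).symm
  -- frame bounds for each n
  set S : ℕ → ℝ := fun n => ∑' i : ι, ‖⟪w n, g i⟫‖ ^ 2 with hS
  have hframe_n : ∀ n, A * ‖w n‖ ^ 2 ≤ S n ∧ S n ≤ B * ‖w n‖ ^ 2 :=
    fun n => hframe _ (hw_mem n)
  have hsummable_i : ∀ n, Summable fun i : ι => ‖⟪w n, g i⟫‖ ^ 2 := by
    intro n
    by_contra hns
    have h0 : S n = 0 := tsum_eq_zero_of_not_summable hns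
    have h1 := (hframe_n n).1
    have h2 := (hframe_n n).2
    rw [h0] at h1 h2
    have h5 : ‖w n‖ ^ 2 = 0 := le_antisymm (by nlinarith) (sq_nonneg _)
    have h6 : w n = 0 := norm_eq_zero.mp ((pow_eq_zero_iff two_ne_zero).mp h5)
    apply hns
    have h7 : (fun i : ι => ‖⟪w n, g i⟫‖ ^ 2) = fun _ => (0 : ℝ) := by
      funext i; simp [h6]
    rw [h7]
    exact summable_zero
  have hS_nonneg : ∀ n, 0 ≤ S n := fun n => tsum_nonneg fun i => sq_nonneg _
  have hS_summable : Summable S :=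
    Summable.of_nonneg_of_le hS_nonneg (fun n => (hframe_n n).2)
      (hsum_w.summable.mul_left B)
  -- summability over the product
  set G : ℕ × ι → ℝ := fun q => ‖⟪w q.1, g q.2⟫‖ ^ 2 with hG
  have hG_summable : Summable G := by
    rw [summable_prod_of_nonneg (fun q => sq_nonneg _)]
    exact ⟨fun n => hsummable_i n, by simpa [hG] using hS_summable⟩
  -- identify the big tsum
  have htsum_eq : (∑' p : ι × ℕ, ‖⟪f, (L ^ p.2) (g p.1)⟫‖ ^ 2) = ∑' n : ℕ, S n := by
    have h1 : (∑' p : ι × ℕ, ‖⟪f, (L ^ p.2) (g p.1)⟫‖ ^ 2)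
        = ∑' p : ι × ℕ, G ((Equiv.prodComm ι ℕ) p) := by
      refine tsum_congr fun p => ?_
      rw [key p.2 p.1]
      simp [hG, key p.2 p.1, Equiv.prodComm]
    rw [h1, (Equiv.prodComm ι ℕ).tsum_eq G, Summable.tsum_prod' hG_summable fun n => hsummable_i n]
  rw [htsum_eq]
  constructor
  · have hle : ∀ n, A * ‖w n‖ ^ 2 ≤ S n := fun n => (hframe_n n).1
    have := Summable.tsum_le_tsum hle (hsum_w.summable.mul_left A) hS_summable
    rwa [(hsum_w.mul_left A).tsum_eq] at this
  · have hle : ∀ n, S n ≤ B * ‖w n‖ ^ 2 := fun n => (hframe_n n).2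
    have := Summable.tsum_le_tsum hle hS_summable (hsum_w.summable.mul_left B)
    rwa [(hsum_w.mul_left B).tsum_eq] at this
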